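/- Let m, n be positive integers, let α₁, …, αₙ be pairwise distinct elements of the field F = GF(2^m), and let G ∈ F[X] be a nonconstant square-free polynomial of degree r with G(αᵢ) ≠ 0 for all i. Then every nonzero codeword of the binary Goppa code Γ(L,G) has Hamming weight at least 2r + 1; that is, Γ(L,G) has minimum distance at least 2·deg G + 1 (its designed minimum distance as a Goppa code with polynomial G²). -/

import Mathlib

open Polynomial

/-- The "syndrome" polynomial `Σᵢ cᵢ · ∏_{j ≠ i} (X - αⱼ)` associated to a binary word
`c ∈ (F₂)ⁿ` and a support `α : Fin n → GF(2^m)`, with the coordinates of `c` viewed in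
`GF(2^m)` via the inclusion `F₂ ⊆ GF(2^m)`.  A word `c` belongs to the binary Goppa code
`Γ(L, G)` iff `G` divides this polynomial. -/
noncomputable def goppaSyndrome {m n : ℕ} (α : Fin n → GaloisField 2 m)
    (c : Fin n → ZMod 2) : Polynomial (GaloisField 2 m) :=
  ∑ i, algebraMap (ZMod 2) (GaloisField 2 m) (c i) •
    ∏ j ∈ Finset.univ \ {i}, (X - C (α j))

lemma derivative_derivative_char_two {F : Type*} [Field F] [CharP F 2]
    (p : Polynomial F) : derivative (derivative p) = 0 := by
  ext k
  simp only [coeff_derivative, coeff_zero]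
  have h2 : ((k + 1) * (k + 1 + 1) : F) = 0 := by
    have : (((k + 1) * (k + 1 + 1) : ℕ) : F) = 0 := by
      rw [CharP.cast_eq_zero_iff F 2]
      exact (Nat.even_mul_succ_self (k + 1)).two_dvd
    push_cast at this
    linear_combination this
  push_cast
  linear_combination p.coeff (k + 1 + 1) * h2

lemma derivative_finset_prod {R ι : Type*} [CommRing R] [DecidableEq ι]
    (s : Finset ι) (g : ι → Polynomial R) :
    derivative (∏ i ∈ s, g i) =
      ∑ i ∈ s, (∏ j ∈ s.erase i, g j) * derivative (g i) := by
  induction s using Finset.induction_on with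
  | empty => simp
  | @insert a s ha ih =>
    rw [Finset.prod_insert ha, derivative_mul, ih, Finset.sum_insert ha,
      Finset.erase_insert ha, Finset.mul_sum]
    congr 1
    · exact mul_comm _ _
    · refine Finset.sum_congr rfl fun i hi => ?_
      rw [Finset.erase_insert_of_ne (ne_of_mem_of_not_mem hi ha).symm,
        Finset.prod_insert (fun h => ha (Finset.mem_of_mem_erase h)), mul_assoc]

/-- For a nonconstant square-free Goppa polynomial `G` of degree `r`, every nonzero codeword
of the binary Goppa code `Γ(L, G)` has Hamming weight at least `2r + 1`. -/
theorem goppa_code_squarefree_min_weight (m n : ℕ) (hm : 0 < m) (hn : 0 < n)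
    (α : Fin n → GaloisField 2 m) (hα : Function.Injective α)
    (G : Polynomial (GaloisField 2 m)) (hsq : Squarefree G) (hdeg : 0 < G.natDegree)
    (hroots : ∀ i, G.eval (α i) ≠ 0) (c : Fin n → ZMod 2)
    (hc : c ≠ 0) (hcode : G ∣ goppaSyndrome α c) :
    2 * G.natDegree + 1 ≤ hammingNorm c := by
  classical
  set S : Finset (Fin n) := Finset.univ.filter (fun i => c i ≠ 0) with hS
  set f : Polynomial (GaloisField 2 m) := ∏ i ∈ S, (X - C (α i)) with hf
  set h : Polynomial (GaloisField 2 m) := ∏ j ∈ Finset.univ \ S, (X - C (α j)) with hh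
  have hone : ∀ x : ZMod 2, x ≠ 0 → x = 1 := by decide
  -- rewrite the syndrome
  have hsyn : goppaSyndrome α c = h * derivative f := by
    rw [hf, derivative_finset_prod]
    simp only [derivative_sub, derivative_X, derivative_C, sub_zero, mul_one]
    rw [Finset.mul_sum, goppaSyndrome]
    rw [← Finset.sum_subset (Finset.subset_univ S)]
    · refine Finset.sum_congr rfl fun i hi => ?_
      have hci : c i = 1 := hone _ (Finset.mem_filter.mp hi).2
      rw [hci, map_one, one_smul]
      have hsplit : Finset.univ \ {i} = (Finset.univ \ S) ∪ S.erase i := by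
        ext j
        simp only [Finset.mem_sdiff, Finset.mem_union, Finset.mem_erase,
          Finset.mem_singleton, Finset.mem_univ, true_and]
        constructor
        · intro hj
          by_cases hjS : j ∈ S
          · exact Or.inr ⟨hj, hjS⟩
          · exact Or.inl hjS
        · rintro (hj | ⟨hj, _⟩)
          · intro h'; exact hj (h' ▸ hi)
          · exact hj
      rw [hsplit, Finset.prod_union]
      exact Finset.disjoint_left.mpr fun j hj hj' => (Finset.mem_sdiff.mp hj).2
        (Finset.mem_of_mem_erase hj')
    · intro i _ hi
      have hci : c i = 0 := by
        by_contra hne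
        exact hi (Finset.mem_filter.mpr ⟨Finset.mem_univ i, hne⟩)
      rw [hci, map_zero, zero_smul]
  rw [hsyn] at hcode
  -- G is coprime to h
  have hcop : IsCoprime G h := by
    refine IsCoprime.prod_right fun j _ => ?_
    refine ((Irreducible.coprime_iff_not_dvd (irreducible_X_sub_C (α j))).mpr ?_).symm
    rw [dvd_iff_isRoot]
    exact fun hr => hroots j hr
  have hdvd : G ∣ derivative f := hcop.dvd_of_dvd_mul_left hcode
  -- f has positive degree and its derivative is nonzero
  have hS_ne : S.Nonempty := by
    rcases Function.ne_iff.mp hc with ⟨i, hi⟩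
    exact ⟨i, Finset.mem_filter.mpr ⟨Finset.mem_univ i, hi⟩⟩
  have hfdeg : f.natDegree = S.card := by
    rw [hf, natDegree_prod _ _ fun i _ => X_sub_C_ne_zero (α i)]
    simp [natDegree_X_sub_C]
  have hsep : f.Separable := separable_prod_X_sub_C_iff'.mpr
    (fun x _ y _ hxy => hα hxy)
  have hf'ne : derivative f ≠ 0 := by
    intro h0
    have hsep' := hsep
    rw [Separable, h0] at hsep'
    have hu : IsUnit f := isCoprime_zero_right.mp hsep'
    have hz : f.natDegree = 0 := natDegree_eq_zero_of_isUnit hu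
    rw [hfdeg] at hz
    exact hS_ne.card_pos.ne' hz
  -- derivative f is a square
  have hdd : derivative (derivative f) = 0 := derivative_derivative_char_two _
  set u : Polynomial (GaloisField 2 m) := (contract 2 (derivative f)).map
    ((frobeniusEquiv (GaloisField 2 m) 2).symm : GaloisField 2 m →+* GaloisField 2 m)
    with hu
  have hsq2 : derivative f = u ^ 2 := by
    have h1 : expand (GaloisField 2 m) 2 (contract 2 (derivative f)) = derivative f :=
      expand_contract 2 hdd (by norm_num)
    have h2 : (contract 2 (derivative f)) = u.map (frobenius (GaloisField 2 m) 2) := by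
      rw [hu, map_map]
      have hcomp : (frobenius (GaloisField 2 m) 2).comp
          ((frobeniusEquiv (GaloisField 2 m) 2).symm : GaloisField 2 m →+* GaloisField 2 m) =
          RingHom.id (GaloisField 2 m) := by
        ext x
        simp [RingHom.comp_apply]
      rw [hcomp, map_id]
    calc derivative f = expand (GaloisField 2 m) 2 (contract 2 (derivative f)) := h1.symm
      _ = expand (GaloisField 2 m) 2 (u.map (frobenius (GaloisField 2 m) 2)) := by rw [h2]
      _ = (expand (GaloisField 2 m) 2 u).map (frobenius (GaloisField 2 m) 2) :=
        (map_expand).symm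
      _ = u ^ 2 := map_frobenius_expand (p := 2) u
  rw [hsq2] at hdvd hf'ne
  have hune : u ≠ 0 := fun h0 => hf'ne (by rw [h0]; ring)
  have hGu : G ∣ u := (hsq.dvd_pow_iff_dvd two_ne_zero).mp hdvd
  have hdegGu : G.natDegree ≤ u.natDegree := natDegree_le_of_dvd hGu hune
  have hlt : (u ^ 2).natDegree < f.natDegree := by
    rw [← hsq2]
    exact natDegree_derivative_lt (by rw [hfdeg]; exact hS_ne.card_pos.ne')
  rw [natDegree_pow] at hlt
  have hnorm : hammingNorm c = S.card := rfl
  rw [hnorm, ← hfdeg]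
  omega
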